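/- Let C be a convolutional code with column distances d_j^c. Suppose a codeword v(z) = Σ_{i=0}^s v_i z^i is received with ε_i erased components in coefficient v_i. If for each 0 ≤ i ≤ s there exists j ∈ ℕ₀ such that ε_i + ε_{i+1} + ⋯ + ε_{i+j} ≤ d_j^c − 1 (with ε_l = 0 for l > s), then all erasures can be recovered (the codeword is uniquely determined by its unerased components, given left-to-right recovery). -/
import Mathlib


open Polynomial Matrix

/-- The `j`-th column distance of a convolutional code `C ⊆ F[z]^n`. -/
noncomputable def colDist {F : Type*} [Field F] [DecidableEq F] {n : ℕ}
    (C : Submodule (Polynomial F) (Fin n → Polynomial F)) (j : ℕ) : ℕ :=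
  sInf { d : ℕ | ∃ v ∈ C, (fun b => (v b).coeff 0) ≠ (0 : Fin n → F) ∧
    d = ∑ t ∈ Finset.range (j + 1), hammingNorm (fun b => (v b).coeff t) }

/-- Right primeness of a polynomial matrix. -/
def RightPrime {F : Type*} [Field F] {n k : ℕ}
    (G : Matrix (Fin n) (Fin k) (Polynomial F)) : Prop :=
  ∀ (B : Matrix (Fin n) (Fin k) (Polynomial F))
    (X : Matrix (Fin k) (Fin k) (Polynomial F)), G = B * X → IsUnit X

/-- Noncatastrophic `(n,k)` convolutional code: admits a right prime generator matrix. -/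
def IsNoncatastrophic {F : Type*} [Field F] {n : ℕ} (k : ℕ)
    (C : Submodule (Polynomial F) (Fin n → Polynomial F)) : Prop :=
  ∃ G : Matrix (Fin n) (Fin k) (Polynomial F),
    Function.Injective G.mulVecLin ∧ LinearMap.range G.mulVecLin = C ∧ RightPrime G

/-- Right primeness implies the constant-coefficient matrix is injective. -/
lemma constCoeff_inj {F : Type*} [Field F] {n k : ℕ}
    (G : Matrix (Fin n) (Fin k) (Polynomial F)) (hRP : RightPrime G)
    (c : Fin k → F) (hc : (G.map (fun p => p.coeff 0)).mulVec c = 0) : c = 0 := by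
  by_contra hne
  obtain ⟨p, hp⟩ : ∃ p, c p ≠ 0 := by
    by_contra h; push_neg at h; exact hne (funext h)
  set T' : Matrix (Fin k) (Fin k) (Polynomial F) :=
    (1 : Matrix (Fin k) (Fin k) (Polynomial F)).updateCol p (fun j => Polynomial.C (c j))
    with hT'
  have hdetT' : T'.det = Polynomial.C (c p) := by
    rw [hT', ← Matrix.cramer_apply, Matrix.cramer_one]
    simp
  have hTu : IsUnit T'.det := by
    rw [hdetT']; exact Polynomial.isUnit_C.mpr (isUnit_iff_ne_zero.mpr hp)
  -- the p-th column of G * T' is divisible by X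
  have hdvd : ∀ i, Polynomial.X ∣ (G * T') i p := by
    intro i
    rw [Polynomial.X_dvd_iff]
    have : (G * T') i p = ∑ j, G i j * Polynomial.C (c j) := by
      simp [Matrix.mul_apply, hT', Matrix.updateCol_apply]
    rw [this]
    have := congrFun hc i
    simpa [Matrix.mulVec, dotProduct, Matrix.map_apply,
      Polynomial.coeff_mul_C] using this
  set q : Fin n → Polynomial F := fun i => (G * T') i p / Polynomial.X with hq
  set B : Matrix (Fin n) (Fin k) (Polynomial F) := (G * T').updateCol p q with hB
  set D : Matrix (Fin k) (Fin k) (Polynomial F) :=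
    Matrix.diagonal (fun j => if j = p then Polynomial.X else 1) with hD
  have hBD : B * D = G * T' := by
    apply Matrix.ext
    intro i j
    rw [hD, Matrix.mul_diagonal]
    by_cases hjp : j = p
    · subst hjp
      simp only [if_pos rfl, hB, Matrix.updateCol_apply, if_pos rfl, hq]
      rw [mul_comm]
      exact EuclideanDomain.mul_div_cancel' Polynomial.X_ne_zero (hdvd i)
    · simp [hB, Matrix.updateCol_apply, hjp]
  have hfact : G = B * (D * T'⁻¹) := by
    rw [← Matrix.mul_assoc, hBD, Matrix.mul_nonsing_inv_cancel_right _ _ hTu]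
  have hunit := hRP B (D * T'⁻¹) hfact
  have hdet : IsUnit (D * T'⁻¹).det := (Matrix.isUnit_iff_isUnit_det _).mp hunit
  rw [Matrix.det_mul] at hdet
  have hDdet : D.det = Polynomial.X := by
    rw [hD, Matrix.det_diagonal]
    simp [Finset.prod_ite_eq']
  rw [hDdet] at hdet
  exact Polynomial.not_isUnit_X (isUnit_of_mul_isUnit_left hdet)

lemma shift_one {F : Type*} [Field F] {n k : ℕ}
    (C : Submodule (Polynomial F) (Fin n → Polynomial F))
    (hC : IsNoncatastrophic k C)
    (u : Fin n → Polynomial F) (hu : u ∈ C) (h0 : ∀ b, (u b).coeff 0 = 0) :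
    ∃ u' ∈ C, u = (Polynomial.X : Polynomial F) • u' := by
  obtain ⟨G, hinj, hrange, hRP⟩ := hC
  rw [← hrange] at hu
  obtain ⟨m, hm⟩ := hu
  have hm' : G.mulVec m = u := hm
  have hc0 : (fun j => (m j).coeff 0) = 0 := by
    apply constCoeff_inj G hRP
    funext i
    have : (u i).coeff 0 = 0 := h0 i
    rw [← hm'] at this
    simpa [Matrix.mulVec, dotProduct, Matrix.map_apply,
      Polynomial.finset_sum_coeff, Polynomial.mul_coeff_zero] using this
  have hdvd : ∀ j, Polynomial.X ∣ m j := by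
    intro j
    rw [Polynomial.X_dvd_iff]
    exact congrFun hc0 j
  refine ⟨G.mulVec (fun j => m j / Polynomial.X), ?_, ?_⟩
  · rw [← hrange]; exact ⟨_, rfl⟩
  · funext b
    rw [← hm']
    simp only [Pi.smul_apply, smul_eq_mul, Matrix.mulVec, dotProduct,
      Finset.mul_sum]
    apply Finset.sum_congr rfl
    intro j _
    rw [mul_left_comm]
    congr 1
    exact (EuclideanDomain.mul_div_cancel' Polynomial.X_ne_zero (hdvd j)).symm

lemma shift_pow {F : Type*} [Field F] {n k : ℕ}
    (C : Submodule (Polynomial F) (Fin n → Polynomial F))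
    (hC : IsNoncatastrophic k C) :
    ∀ (i : ℕ) (u : Fin n → Polynomial F), u ∈ C → (∀ b l, l < i → (u b).coeff l = 0) →
    ∃ u' ∈ C, u = (Polynomial.X ^ i : Polynomial F) • u' := by
  intro i
  induction i with
  | zero => intro u hu _; exact ⟨u, hu, by simp⟩
  | succ i ih =>
    intro u hu h0
    obtain ⟨w, hwC, hw⟩ := shift_one C hC u hu (fun b => h0 b 0 (Nat.succ_pos i))
    obtain ⟨u', hu'C, hu'⟩ := ih w hwC (by
      intro b l hl
      have := h0 b (l + 1) (by omega)
      rw [hw] at this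
      simpa [Polynomial.coeff_X_mul] using this)
    refine ⟨u', hu'C, ?_⟩
    rw [hw, hu', smul_smul, pow_succ, mul_comm]
/-- Let `C` be a (noncatastrophic) convolutional code with column distances
`d_j^c`, and suppose a codeword of degree at most `s` is received with erasure pattern
`E i ⊆ Fin n` in coefficient `v_i` (so `ε_i = |E i|`, with `E i = ∅` for `i > s`). If for
every `0 ≤ i ≤ s` there is `j` with `ε_i + ⋯ + ε_{i+j} ≤ d_j^c − 1`, then all erasures can
be recovered: any two codewords agreeing on all non-erased components are equal. -/
theorem full_recovery_of_erasures {F : Type*} [Field F] [DecidableEq F] {n k s : ℕ}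
    (C : Submodule (Polynomial F) (Fin n → Polynomial F))
    (hC : IsNoncatastrophic k C)
    (E : ℕ → Finset (Fin n))
    (hEsupp : ∀ i : ℕ, s < i → E i = ∅)
    (hcond : ∀ i ≤ s, ∃ j : ℕ,
      (∑ l ∈ Finset.range (j + 1), (E (i + l)).card) < colDist C j) :
    ∀ v ∈ C, ∀ w ∈ C,
      (∀ (i : ℕ) (b : Fin n), b ∉ E i → (v b).coeff i = (w b).coeff i) → v = w := by
  intro v hv w hw hagree
  set u : Fin n → Polynomial F := v - w with hu
  have huC : u ∈ C := C.sub_mem hv hw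
  have hsupp : ∀ (l : ℕ) (b : Fin n), (u b).coeff l ≠ 0 → b ∈ E l := by
    intro l b h
    by_contra hb
    exact h (by simp [hu, Polynomial.coeff_sub, hagree l b hb])
  have key : ∀ (i : ℕ) (b : Fin n), (u b).coeff i = 0 := by
    intro i
    induction i using Nat.strong_induction_on with
    | _ i ih =>
      intro b
      by_cases his : i ≤ s
      · by_contra hb
        obtain ⟨u', hu'C, hshift⟩ := shift_pow C hC i u huC (fun b l hl => ih l hl b)
        obtain ⟨j, hj⟩ := hcond i his
        have hcoeff : ∀ (t : ℕ) (b : Fin n), (u' b).coeff t = (u b).coeff (i + t) := by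
          intro t b
          rw [hshift]
          simp [Polynomial.coeff_X_pow_mul', add_comm]
        have hmem : colDist C j ≤
            ∑ t ∈ Finset.range (j + 1), hammingNorm (fun b => (u' b).coeff t) := by
          apply Nat.sInf_le
          refine ⟨u', hu'C, ?_, rfl⟩
          intro h
          apply hb
          have h2 := congrFun h b
          simp only [Pi.zero_apply] at h2
          rw [hcoeff 0 b] at h2
          simpa using h2
        have hbound : ∀ t ∈ Finset.range (j + 1),
            hammingNorm (fun b => (u' b).coeff t) ≤ (E (i + t)).card := by
          intro t _
          apply Finset.card_le_card
          intro b hbmem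
          simp only [Finset.mem_filter] at hbmem
          exact hsupp (i + t) b (by rw [← hcoeff]; exact hbmem.2)
        have hsum := Finset.sum_le_sum hbound
        exact absurd (lt_of_le_of_lt (hmem.trans hsum) hj) (lt_irrefl _)
      · by_contra hb
        have hmem := hsupp i b hb
        rw [hEsupp i (by omega)] at hmem
        exact absurd hmem (Finset.notMem_empty b)
  have hzero : u = 0 := funext fun b => Polynomial.ext fun i => key i b
  have : v - w = 0 := hzero
  exact sub_eq_zero.mp this
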